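/- Let W̃ ∈ ℝ^{n×n} be a nonnegative row-stochastic matrix (each row sums to 1) that is irreducible, i.e., for all i, j there exists m ≥ 1 with (W̃^m)_{ij} > 0. Let λ ∈ [0,1]^n and suppose λ_k < 1 for at least one index k. Then every complex eigenvalue of the matrix diag(λ)·W̃ has modulus strictly less than 1; in particular, the matrix I − diag(λ)·W̃ is invertible. -/

import Mathlib

open Matrix Polynomial Finset

lemma eval_charpoly' {n : ℕ} (B : Matrix (Fin n) (Fin n) ℂ) (μ : ℂ) :
    B.charpoly.eval μ = (Matrix.diagonal (fun _ => μ) - B).det := by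
  rw [Matrix.charpoly, Polynomial.eval, ← Polynomial.coe_eval₂RingHom, RingHom.map_det]
  congr 1
  ext i j
  simp [Matrix.charmatrix_apply, Matrix.diagonal_apply, Matrix.map_apply]
  split <;> simp

/-- if `Wt` is row-stochastic and irreducible and `lam ∈ [0,1]^n` with
`lam k < 1` for some `k`, then every complex eigenvalue of `diag(lam) * Wt` has modulus
strictly less than 1, and `I - diag(lam) * Wt` is invertible. -/
theorem diag_mul_stochastic_spectrum_lt_one
    (n : ℕ) (hn : 1 ≤ n)
    (Wt : Matrix (Fin n) (Fin n) ℝ)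
    (hWt0 : ∀ i j, 0 ≤ Wt i j) (hWt1 : ∀ i, ∑ j, Wt i j = 1)
    (hirr : ∀ i j, ∃ m, 1 ≤ m ∧ 0 < (Wt ^ m) i j)
    (lam : Fin n → ℝ) (hlam : ∀ j, lam j ∈ Set.Icc (0 : ℝ) 1)
    (hk : ∃ k, lam k < 1) :
    (∀ μ : ℂ,
        ((Matrix.diagonal lam * Wt).map (fun r : ℝ => (r : ℂ))).charpoly.IsRoot μ →
        ‖μ‖ < 1) ∧
    IsUnit (1 - Matrix.diagonal lam * Wt) := by
  set A : Matrix (Fin n) (Fin n) ℝ := Matrix.diagonal lam * Wt with hA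
  set B : Matrix (Fin n) (Fin n) ℂ := A.map (fun r : ℝ => (r : ℂ)) with hB
  have hBentry : ∀ i j, B i j = ((lam i * Wt i j : ℝ) : ℂ) := by
    intro i j
    simp [hB, hA, Matrix.map_apply, Matrix.diagonal_mul]
  -- nonnegativity of powers of Wt
  have hWpow : ∀ m : ℕ, ∀ i j, 0 ≤ (Wt ^ m) i j := by
    intro m
    induction m with
    | zero => intro i j; simp [Matrix.one_apply]; split <;> norm_num
    | succ m ih =>
      intro i j
      rw [pow_succ, Matrix.mul_apply]
      exact Finset.sum_nonneg fun l _ => mul_nonneg (ih i l) (hWt0 l j)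
  have part1 : ∀ μ : ℂ, B.charpoly.IsRoot μ → ‖μ‖ < 1 := by
    intro μ hroot
    by_contra habs
    push_neg at habs
    have hdet : (Matrix.diagonal (fun _ => μ) - B).det = 0 := by
      rw [← eval_charpoly']; exact hroot
    obtain ⟨v, hv0, hvker⟩ := (Matrix.exists_mulVec_eq_zero_iff).2 hdet
    have hrow : ∀ i, ∑ j, B i j * v j = μ * v i := by
      intro i
      have h := congrFun hvker i
      simp only [Matrix.sub_mulVec, Pi.sub_apply, Matrix.mulVec_diagonal, Pi.zero_apply,
        sub_eq_zero] at h
      simpa [Matrix.mulVec, dotProduct] using h.symm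
    have _inst : Nonempty (Fin n) := ⟨⟨0, hn⟩⟩
    have hne : (Finset.univ : Finset (Fin n)).Nonempty := Finset.univ_nonempty
    set c : ℝ := Finset.univ.sup' hne (fun i => ‖v i‖) with hc
    have hle : ∀ i, ‖v i‖ ≤ c := fun i =>
      Finset.le_sup' (fun i => ‖v i‖) (Finset.mem_univ i)
    obtain ⟨i0, _, hi0⟩ := Finset.exists_mem_eq_sup' hne (fun i => ‖v i‖)
    have hcpos : 0 < c := by
      obtain ⟨i, hi⟩ := Function.ne_iff.1 hv0
      exact lt_of_lt_of_le (by simpa using hi) (hle i)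
    -- key closure property
    have hS : ∀ i, ‖v i‖ = c →
        lam i = 1 ∧ ∀ j, 0 < Wt i j → ‖v j‖ = c := by
      intro i hi
      have h1 : c ≤ ‖∑ j, B i j * v j‖ := by
        rw [hrow i, norm_mul, hi]
        calc c = 1 * c := (one_mul c).symm
        _ ≤ ‖μ‖ * c := by
            exact mul_le_mul_of_nonneg_right habs (le_of_lt hcpos)
      have h2 : ‖∑ j, B i j * v j‖ ≤ ∑ j, lam i * Wt i j * ‖v j‖ := by
        refine le_trans (norm_sum_le _ _) (Finset.sum_le_sum fun j _ => ?_)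
        rw [norm_mul, hBentry]
        rw [Complex.norm_real, Real.norm_eq_abs, abs_of_nonneg (mul_nonneg (hlam i).1 (hWt0 i j))]
      have h3 : ∑ j, lam i * Wt i j * ‖v j‖ ≤ lam i * c := by
        calc ∑ j, lam i * Wt i j * ‖v j‖
            ≤ ∑ j, lam i * Wt i j * c := by
              refine Finset.sum_le_sum fun j _ => ?_
              exact mul_le_mul_of_nonneg_left (hle j) (mul_nonneg (hlam i).1 (hWt0 i j))
          _ = lam i * c := by
              rw [← Finset.sum_mul, ← Finset.mul_sum, hWt1 i, mul_one]
      have h4 : lam i * c ≤ c := by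
        nlinarith [(hlam i).2, hcpos]
      have heq3 : lam i * c = c := le_antisymm h4 (by linarith)
      have hlami : lam i = 1 :=
        mul_right_cancel₀ (ne_of_gt hcpos) (by rw [one_mul]; exact heq3)
      refine ⟨hlami, ?_⟩
      have hsum_eq : ∑ j, lam i * Wt i j * ‖v j‖ = lam i * c := le_antisymm h3 (by linarith)
      have hzero : ∑ j, lam i * Wt i j * (c - ‖v j‖) = 0 := by
        have : ∑ j, lam i * Wt i j * c = lam i * c := by
          rw [← Finset.sum_mul, ← Finset.mul_sum, hWt1 i, mul_one]
        calc ∑ j, lam i * Wt i j * (c - ‖v j‖)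
            = ∑ j, lam i * Wt i j * c - ∑ j, lam i * Wt i j * ‖v j‖ := by
              rw [← Finset.sum_sub_distrib]; congr 1; ext j; ring
          _ = 0 := by rw [this, hsum_eq, sub_self]
      intro j hj
      have := (Finset.sum_eq_zero_iff_of_nonneg (fun j _ =>
        mul_nonneg (mul_nonneg (hlam i).1 (hWt0 i j)) (sub_nonneg.2 (hle j)))).1 hzero
        j (Finset.mem_univ j)
      have hpos : 0 < lam i * Wt i j := by rw [hlami, one_mul]; exact hj
      have : c - ‖v j‖ = 0 := by
        rcases mul_eq_zero.1 this with h | h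
        · exact absurd h (ne_of_gt hpos)
        · exact h
      linarith [this]
    -- closure under powers
    have hpow : ∀ m : ℕ, ∀ i j, ‖v i‖ = c → 0 < (Wt ^ m) i j →
        ‖v j‖ = c := by
      intro m
      induction m with
      | zero =>
        intro i j hi hij
        simp only [pow_zero, Matrix.one_apply] at hij
        split at hij
        · subst ‹i = j›; exact hi
        · simp at hij
      | succ m ih =>
        intro i j hi hij
        rw [pow_succ, Matrix.mul_apply] at hij
        have : ∃ l, 0 < (Wt ^ m) i l * Wt l j := by
          by_contra hcon
          push_neg at hcon
          have : ∑ l, (Wt ^ m) i l * Wt l j ≤ 0 := Finset.sum_nonpos fun l _ => hcon l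
          linarith
        obtain ⟨l, hl⟩ := this
        have hl1 : 0 < (Wt ^ m) i l := by
          rcases lt_or_eq_of_le (hWpow m i l) with h | h
          · exact h
          · rw [← h, zero_mul] at hl; linarith
        have hl2 : 0 < Wt l j := by
          rcases lt_or_eq_of_le (hWt0 l j) with h | h
          · exact h
          · rw [← h, mul_zero] at hl; linarith
        exact (hS l (ih i l hi hl1)).2 j hl2
    obtain ⟨k, hkl⟩ := hk
    obtain ⟨m, _, hm⟩ := hirr i0 k
    have hkc : ‖v k‖ = c := hpow m i0 k hi0.symm hm
    have := (hS k hkc).1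
    linarith
  refine ⟨part1, ?_⟩
  rw [Matrix.isUnit_iff_isUnit_det]
  rw [isUnit_iff_ne_zero]
  intro hdet0
  have hmap : ((1 - A).map (fun r : ℝ => (r : ℂ))).det = 0 := by
    have heq : ((1 - A).map (fun r : ℝ => (r : ℂ)))
        = Complex.ofRealHom.mapMatrix (1 - A) := rfl
    rw [heq, ← RingHom.map_det, hdet0, map_zero]
  have : B.charpoly.IsRoot 1 := by
    rw [Polynomial.IsRoot, eval_charpoly']
    have h1 : (Matrix.diagonal (fun _ : Fin n => (1 : ℂ))) = 1 := by
      simp [Matrix.diagonal_one]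
    rw [h1]
    have : (1 : Matrix (Fin n) (Fin n) ℂ) - B = (1 - A).map (fun r : ℝ => (r : ℂ)) := by
      have heq : ((1 - A).map (fun r : ℝ => (r : ℂ)))
          = Complex.ofRealHom.mapMatrix (1 - A) := rfl
      rw [heq, map_sub, _root_.map_one]
      rfl
    rw [this, hmap]
  have := part1 1 this
  simp at this
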